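/- Let G = (V, E) be a connected multigraph, f a divisor on G, and M a positive integer with M > dist_rec_G(f) + max{0, max_{v ∈ V}(f(v) − d_G(v))}; let G' and f' be as in the apex construction. Then dist_rec_G(f) = dist_nonhalt_{G'}(f'). -/

import Mathlib

variable {V : Type*} [Fintype V] [DecidableEq V]

/-- The degree of vertex `v` in the multigraph with edge-multiplicity function `m`. -/
def mgDeg (m : V → V → ℕ) (v : V) : ℕ := ∑ u, m v u

/-- The divisor obtained from `f` by firing vertex `v`. -/
def mgFire (m : V → V → ℕ) (f : V → ℤ) (v : V) : V → ℤ :=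
  fun u => if u = v then f v - mgDeg m v else f u + m v u

/-- The divisor obtained from `f` by firing the vertices of `L` in order. -/
def mgPlay (m : V → V → ℕ) (f : V → ℤ) (L : List V) : V → ℤ :=
  L.foldl (mgFire m) f

/-- `L` is a legal game from `f`: each fired vertex is active when fired. -/
def mgLegal (m : V → V → ℕ) : (V → ℤ) → List V → Prop
  | _, [] => True
  | f, v :: L => ((mgDeg m v : ℤ) ≤ f v) ∧ mgLegal m (mgFire m f v) L

/-- A divisor is stable if no vertex is active. -/
def mgStable (m : V → V → ℕ) (f : V → ℤ) : Prop := ∀ v, f v < (mgDeg m v : ℤ)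

/-- A divisor is halting if some legal game from it ends at a stable divisor. -/
def mgHalting (m : V → V → ℕ) (f : V → ℤ) : Prop :=
  ∃ L : List V, mgLegal m f L ∧ mgStable m (mgPlay m f L)

/-- A divisor is recurrent if some non-empty legal game from it leads back to it. -/
def mgRecurrent (m : V → V → ℕ) (f : V → ℤ) : Prop :=
  ∃ L : List V, L ≠ [] ∧ mgLegal m f L ∧ mgPlay m f L = f

/-- A divisor is effective if it is nonnegative everywhere. -/
def mgEffective (f : V → ℤ) : Prop := ∀ v, 0 ≤ f v

/-- The degree of a divisor. -/
def mgDegDiv (f : V → ℤ) : ℤ := ∑ v, f v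

/-- Distance of a divisor from a recurrent state. -/
noncomputable def mgDistRec (m : V → V → ℕ) (f : V → ℤ) : ℕ :=
  sInf {n : ℕ | ∃ g : V → ℤ, mgEffective g ∧ mgDegDiv g = (n : ℤ) ∧ mgRecurrent m (f + g)}

/-- Distance of a divisor from a non-halting state. -/
noncomputable def mgDistNonhalt (m : V → V → ℕ) (f : V → ℤ) : ℕ :=
  sInf {n : ℕ | ∃ g : V → ℤ, mgEffective g ∧ mgDegDiv g = (n : ℤ) ∧ ¬ mgHalting m (f + g)}

/-- A multigraph is connected if any two vertices are joined by a path of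
positive-multiplicity edges. -/
def mgConnected (m : V → V → ℕ) : Prop :=
  ∀ u v : V, Relation.ReflTransGen (fun a b => 0 < m a b) u v

/-- `f` and `g` are linearly equivalent: `f` can be transformed to `g` by firings. -/
def mgLinEquiv (m : V → V → ℕ) (f g : V → ℤ) : Prop :=
  ∃ L : List V, mgPlay m f L = g

/-- A divisor is winnable if it is linearly equivalent to an effective divisor. -/
def mgWinnable (m : V → V → ℕ) (f : V → ℤ) : Prop :=
  ∃ g : V → ℤ, mgEffective g ∧ mgLinEquiv m f g

/-- The rank of a divisor. -/
noncomputable def mgRank (m : V → V → ℕ) (f : V → ℤ) : ℤ :=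
  ((sInf {n : ℕ | ∃ g : V → ℤ, mgEffective g ∧ mgDegDiv g = (n : ℤ) ∧
    ¬ mgWinnable m (f - g)} : ℕ) : ℤ) - 1

/-- Edge multiplicities of the apex construction: the edges of `G` (on the `some`
vertices) together with `M` parallel edges between the new vertex `none` and each
original vertex. -/
def apexM (m : V → V → ℕ) (M : ℕ) : Option V → Option V → ℕ
  | some u, some v => m u v
  | some _, none => M
  | none, some _ => M
  | none, none => 0

/-- The divisor `f\'` of the apex construction: `f\'(v) = f(v) + M` on original
vertices and `f\'(v_new) = 0`. -/
def apexF (f : V → ℤ) (M : ℕ) : Option V → ℤ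
  | some v => f v + M
  | none => 0

section Helpers

variable {W : Type*} [Fintype W] [DecidableEq W]

lemma mgPlay_nil (m : W → W → ℕ) (f : W → ℤ) : mgPlay m f [] = f := rfl

lemma mgPlay_cons (m : W → W → ℕ) (f : W → ℤ) (v : W) (L : List W) :
    mgPlay m f (v :: L) = mgPlay m (mgFire m f v) L := rfl

lemma mgPlay_append (m : W → W → ℕ) (f : W → ℤ) (L1 L2 : List W) :
    mgPlay m f (L1 ++ L2) = mgPlay m (mgPlay m f L1) L2 :=
  List.foldl_append

lemma mgLegal_nil (m : W → W → ℕ) (f : W → ℤ) : mgLegal m f [] := trivial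

lemma mgLegal_cons_iff (m : W → W → ℕ) (f : W → ℤ) (v : W) (L : List W) :
    mgLegal m f (v :: L) ↔ ((mgDeg m v : ℤ) ≤ f v) ∧ mgLegal m (mgFire m f v) L := Iff.rfl

lemma mgPlay_count (m : W → W → ℕ) (hloop : ∀ v, m v v = 0) (f : W → ℤ) (L : List W) (v : W) :
    mgPlay m f L v = f v + ∑ u, (L.count u : ℤ) * m u v - (L.count v : ℤ) * mgDeg m v := by
  induction L generalizing f with
  | nil => simp [mgPlay_nil]
  | cons a T ih =>
    rw [mgPlay_cons, ih]
    have hfire : mgFire m f a v = f v + (m a v : ℤ) - (if v = a then (mgDeg m v : ℤ) else 0) := by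
      by_cases h : v = a
      · subst h; simp [mgFire, hloop]
      · simp [mgFire, h]
    have hcnt : ∀ u : W, (((a :: T).count u : ℤ)) = (T.count u : ℤ) + (if u = a then 1 else 0) := by
      intro u
      rw [List.count_cons]
      by_cases h : a = u
      · subst h; simp
      · have h' : ¬ u = a := fun hh => h hh.symm
        simp [h, h']
    simp only [hcnt]
    have hsum : ∑ u, ((T.count u : ℤ) + (if u = a then 1 else 0)) * (m u v : ℤ)
        = (∑ u, (T.count u : ℤ) * (m u v : ℤ)) + (m a v : ℤ) := by
      have hptw : ∀ u : W, ((T.count u : ℤ) + (if u = a then 1 else 0)) * (m u v : ℤ)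
          = (T.count u : ℤ) * m u v + (if u = a then (m u v : ℤ) else 0) := by
        intro u; split_ifs <;> ring
      rw [Finset.sum_congr rfl (fun u _ => hptw u), Finset.sum_add_distrib]
      congr 1
      simp
    rw [hsum, hfire]
    split_ifs <;> ring
set_option linter.unusedSectionVars false

lemma mgLegal_iff_splits (m : W → W → ℕ) (f : W → ℤ) (P : List W) :
    mgLegal m f P ↔ ∀ A x B, P = A ++ x :: B → (mgDeg m x : ℤ) ≤ mgPlay m f A x := by
  induction P generalizing f with
  | nil =>
    constructor
    · intro _ A x B h; exact absurd h (by simp)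
    · intro _; exact mgLegal_nil m f
  | cons y T ih =>
    constructor
    · rintro ⟨hy, hT⟩ A x B hP
      cases A with
      | nil =>
        simp only [List.nil_append] at hP
        injection hP with h1 h2
        subst h1
        exact hy
      | cons a A' =>
        rw [List.cons_append] at hP
        injection hP with h1 h2
        subst h1
        exact (ih (mgFire m f y)).1 hT A' x B h2
    · intro h
      refine ⟨h [] y T rfl, (ih _).2 ?_⟩
      intro A x B hT
      exact h (y :: A) x B (by rw [hT, List.cons_append])

lemma mgLegal_append (m : W → W → ℕ) (f : W → ℤ) (L1 L2 : List W) :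
    mgLegal m f (L1 ++ L2) ↔ mgLegal m f L1 ∧ mgLegal m (mgPlay m f L1) L2 := by
  induction L1 generalizing f with
  | nil => simp [mgPlay_nil, mgLegal_nil, mgLegal]
  | cons a T ih =>
    rw [List.cons_append, mgLegal_cons_iff, mgLegal_cons_iff, ih, mgPlay_cons, and_assoc]

lemma mgFire_add (m : W → W → ℕ) (f c : W → ℤ) (v : W) :
    mgFire m (f + c) v = mgFire m f v + c := by
  funext u
  by_cases h : u = v
  · subst h; simp [mgFire]; ring
  · simp [mgFire, h]; ring

lemma mgPlay_add (m : W → W → ℕ) (f c : W → ℤ) (L : List W) :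
    mgPlay m (f + c) L = mgPlay m f L + c := by
  induction L generalizing f with
  | nil => rfl
  | cons a T ih => rw [mgPlay_cons, mgPlay_cons, mgFire_add, ih]

lemma mgLegal_mono (m : W → W → ℕ) {f c : W → ℤ} {L : List W}
    (hc : ∀ u ∈ L, (0:ℤ) ≤ c u) (h : mgLegal m f L) : mgLegal m (f + c) L := by
  induction L generalizing f with
  | nil => exact mgLegal_nil _ _
  | cons a T ih =>
    obtain ⟨h1, h2⟩ := h
    refine ⟨?_, ?_⟩
    · have := hc a (by simp)
      simp only [Pi.add_apply]
      linarith
    · rw [mgFire_add]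
      exact ih (fun u hu => hc u (by simp [hu])) h2

lemma mgPlay_eq_of_count (m : W → W → ℕ) (hloop : ∀ v, m v v = 0) (f : W → ℤ)
    {L L' : List W} (h : ∀ u, L.count u = L'.count u) :
    mgPlay m f L = mgPlay m f L' := by
  funext v
  rw [mgPlay_count m hloop, mgPlay_count m hloop]
  simp [h]

lemma mgFire_eq_add (m : W → W → ℕ) (f : W → ℤ) (v : W) :
    mgFire m f v = f + fun u => if u = v then -(mgDeg m v : ℤ) else (m v u : ℤ) := by
  funext u
  by_cases h : u = v
  · subst h; simp [mgFire]; ring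
  · simp [mgFire, h]

lemma count_reorder (v : W) (A B : List W) (u : W) :
    (v :: (A ++ B)).count u = (A ++ v :: B).count u := by
  simp [List.count_cons, List.count_append]
  omega

lemma mgLegal_reorder (m : W → W → ℕ) (hloop : ∀ v, m v v = 0) {f : W → ℤ} {v : W}
    {A B : List W} (hv : (mgDeg m v : ℤ) ≤ f v) (hA : v ∉ A)
    (h : mgLegal m f (A ++ v :: B)) : mgLegal m f (v :: (A ++ B)) := by
  rw [mgLegal_append] at h
  obtain ⟨hA1, h2⟩ := h
  rw [mgLegal_cons_iff] at h2
  obtain ⟨hact, hB⟩ := h2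
  refine ⟨hv, ?_⟩
  rw [mgLegal_append]
  constructor
  · rw [mgFire_eq_add]
    refine mgLegal_mono m (fun u hu => ?_) hA1
    have hne : ¬ (u = v) := fun hh => hA (hh ▸ hu)
    simp [hne]
  · have e1 : mgPlay m (mgFire m f v) A = mgFire m (mgPlay m f A) v := by
      have e2 : mgPlay m f (v :: A) = mgPlay m f (A ++ [v]) := by
        refine mgPlay_eq_of_count m hloop f (fun u => ?_)
        simp [List.count_cons, List.count_append]
        try omega
      rw [mgPlay_cons] at e2
      rw [mgPlay_append] at e2
      exact e2
    rw [e1]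
    exact hB
lemma exists_first_split {x : W} {L : List W} (hx : x ∈ L) :
    ∃ A B, L = A ++ x :: B ∧ x ∉ A := by
  induction L with
  | nil => cases hx
  | cons a T ih =>
    by_cases h : x = a
    · exact ⟨[], T, by rw [h]; rfl, by simp⟩
    · have hxT : x ∈ T := by
        rcases List.mem_cons.mp hx with h' | h'
        · exact absurd h' h
        · exact h'
      obtain ⟨A, B, h1, h2⟩ := ih hxT
      refine ⟨a :: A, B, by rw [h1, List.cons_append], ?_⟩
      simp [h2, h]

lemma count_le_of_stable (m : W → W → ℕ) (hloop : ∀ v, m v v = 0) :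
    ∀ (n : ℕ) (f : W → ℤ) (L L' : List W), L.length ≤ n →
      mgLegal m f L → mgStable m (mgPlay m f L) → mgLegal m f L' →
      ∀ v, L'.count v ≤ L.count v := by
  intro n
  induction n with
  | zero =>
    intro f L L' hlen hL hst hL' v
    have hLnil : L = [] := List.length_eq_zero_iff.mp (Nat.le_zero.mp hlen)
    subst hLnil
    cases L' with
    | nil => simp
    | cons w T =>
      obtain ⟨hw, -⟩ := hL'
      exact absurd hw (not_le.mpr (hst w))
  | succ n ih =>
    intro f L L' hlen hL hst hL' v
    cases L' with
    | nil => simp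
    | cons w T =>
      obtain ⟨hw, hT⟩ := hL'
      have hwL : w ∈ L := by
        by_contra hno
        have h0 : L.count w = 0 := List.count_eq_zero_of_not_mem hno
        have h2 : mgPlay m f L w < (mgDeg m w : ℤ) := hst w
        rw [mgPlay_count m hloop, h0] at h2
        have hnn : (0:ℤ) ≤ ∑ u, (L.count u : ℤ) * m u w :=
          Finset.sum_nonneg (fun u _ => mul_nonneg (by positivity) (by positivity))
        push_cast at h2
        linarith
      obtain ⟨A, B, hsplit, hAnot⟩ := exists_first_split hwL
      subst hsplit
      have hre := mgLegal_reorder m hloop hw hAnot hL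
      obtain ⟨-, hAB⟩ := hre
      have hstAB : mgStable m (mgPlay m (mgFire m f w) (A ++ B)) := by
        have e : mgPlay m f (w :: (A ++ B)) = mgPlay m f (A ++ w :: B) :=
          mgPlay_eq_of_count m hloop f (count_reorder w A B)
        rw [mgPlay_cons] at e
        rw [e]
        exact hst
      have hlen2 : (A ++ B).length ≤ n := by
        simp only [List.length_append, List.length_cons] at hlen ⊢
        omega
      have hcnt := ih (mgFire m f w) (A ++ B) T hlen2 hAB hstAB hT v
      by_cases hvw : v = w
      · subst hvw
        simp only [List.count_cons, List.count_append] at hcnt ⊢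
        simp at hcnt ⊢
        omega
      · have hvw' : ¬ (w = v) := fun hh => hvw hh.symm
        simp only [List.count_cons, List.count_append] at hcnt ⊢
        simp [hvw'] at hcnt ⊢
        omega

lemma exists_pow_cycle (m : W → W → ℕ) {f : W → ℤ} {C : List W}
    (hleg : mgLegal m f C) (hcyc : mgPlay m f C = f) :
    ∀ n : ℕ, ∃ Ln : List W, mgLegal m f Ln ∧ mgPlay m f Ln = f ∧
      ∀ u, Ln.count u = n * C.count u := by
  intro n
  induction n with
  | zero => exact ⟨[], mgLegal_nil _ _, rfl, by simp⟩
  | succ k ih =>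
    obtain ⟨Ln, h1, h2, h3⟩ := ih
    refine ⟨C ++ Ln, ?_, ?_, ?_⟩
    · rw [mgLegal_append]
      exact ⟨hleg, by rw [hcyc]; exact h1⟩
    · rw [mgPlay_append, hcyc, h2]
    · intro u
      simp [List.count_append, h3]
      ring

lemma not_halting_of_recurrent (m : W → W → ℕ) (hloop : ∀ v, m v v = 0) {f : W → ℤ}
    (hrec : mgRecurrent m f) : ¬ mgHalting m f := by
  obtain ⟨C, hne, hleg, hcyc⟩ := hrec
  rintro ⟨L, hL, hst⟩
  obtain ⟨w, hw⟩ := List.exists_mem_of_ne_nil C hne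
  have hcw : 0 < C.count w := List.count_pos_iff.mpr hw
  obtain ⟨Ln, h1, h2, h3⟩ := exists_pow_cycle m hleg hcyc (L.count w + 1)
  have hbound := count_le_of_stable m hloop L.length f L Ln le_rfl hL hst h1 w
  rw [h3 w] at hbound
  have : L.count w + 1 ≤ (L.count w + 1) * C.count w := Nat.le_mul_of_pos_right _ hcw
  omega

lemma sum_col_eq_deg (m : W → W → ℕ) (hsymm : ∀ u v, m u v = m v u) (v : W) :
    ∑ u, (m u v : ℤ) = (mgDeg m v : ℤ) := by
  have e : ∑ u, (m u v : ℤ) = ∑ u, (m v u : ℤ) :=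
    Finset.sum_congr rfl fun u _ => by rw [hsymm u v]
  rw [e, mgDeg]
  push_cast
  rfl

lemma recurrent_of_active (m : W → W → ℕ) (hsymm : ∀ u v, m u v = m v u)
    (hloop : ∀ v, m v v = 0) [Nonempty W] {f : W → ℤ}
    (h : ∀ v, (mgDeg m v : ℤ) ≤ f v) : mgRecurrent m f := by
  set P := (Finset.univ : Finset W).toList with hPdef
  have hnd : P.Nodup := Finset.nodup_toList _
  have hmem : ∀ v : W, v ∈ P := fun v => by simp [hPdef]
  have hPne : P ≠ [] := by
    obtain ⟨v⟩ := ‹Nonempty W›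
    intro hP
    have := hmem v
    rw [hP] at this
    cases this
  refine ⟨P, hPne, ?_, ?_⟩
  · rw [mgLegal_iff_splits]
    intro A x B hsplit
    rw [mgPlay_count m hloop]
    have hndS : (A ++ x :: B).Nodup := hsplit ▸ hnd
    rw [List.nodup_append] at hndS
    have hxA : A.count x = 0 :=
      List.count_eq_zero_of_not_mem (fun hx => hndS.2.2 x hx x (by simp) rfl)
    rw [hxA]
    have hnn : (0:ℤ) ≤ ∑ u, (A.count u : ℤ) * m u x :=
      Finset.sum_nonneg (fun u _ => mul_nonneg (by positivity) (by positivity))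
    have := h x
    push_cast
    linarith
  · funext v
    rw [mgPlay_count m hloop]
    have hc : ∀ u : W, P.count u = 1 := fun u => List.count_eq_one_of_mem hnd (hmem u)
    simp only [hc]
    rw [show ∑ u : W, ((1:ℕ):ℤ) * (m u v:ℤ) = ∑ u, (m u v : ℤ) by simp]
    rw [sum_col_eq_deg m hsymm v]
    push_cast
    ring
lemma dedup_split : ∀ (L : List W) {A : List W} {x : W} {B : List W},
    L.dedup = A ++ x :: B → ∃ A₀ B₀, L = A₀ ++ x :: B₀ ∧ x ∉ B₀ ∧ ∀ u ∈ B, u ∈ B₀ := by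
  intro L
  induction L with
  | nil =>
    intro A x B h
    rw [List.dedup_nil] at h
    exact absurd h (by simp)
  | cons y T ih =>
    intro A x B h
    by_cases hy : y ∈ T
    · rw [List.dedup_cons_of_mem hy] at h
      obtain ⟨A₀, B₀, h1, h2, h3⟩ := ih h
      exact ⟨y :: A₀, B₀, by rw [h1, List.cons_append], h2, h3⟩
    · rw [List.dedup_cons_of_notMem hy] at h
      cases A with
      | nil =>
        simp only [List.nil_append] at h
        injection h with h1 h2
        subst h1
        exact ⟨[], T, rfl, hy, fun u hu => List.mem_dedup.mp (h2 ▸ hu)⟩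
      | cons a A' =>
        rw [List.cons_append] at h
        injection h with h1 h2
        subst h1
        obtain ⟨A₀, B₀, h3, h4, h5⟩ := ih h2
        exact ⟨y :: A₀, B₀, by rw [h3, List.cons_append], h4, h5⟩

lemma exists_perm_cycle (m : W → W → ℕ) (hsymm : ∀ u v, m u v = m v u)
    (hloop : ∀ v, m v v = 0) (hconn : mgConnected m)
    {f : W → ℤ} {L : List W} (hne : L ≠ []) (hleg : mgLegal m f L)
    (hcyc : mgPlay m f L = f) :
    ∃ P : List W, P.Nodup ∧ (∀ v : W, v ∈ P) ∧ mgLegal m f P := by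
  have hbal : ∀ v : W, (L.count v : ℤ) * mgDeg m v = ∑ u, (L.count u : ℤ) * m u v := by
    intro v
    have hv := congrFun hcyc v
    rw [mgPlay_count m hloop] at hv
    linarith
  have hmemL : ∀ v : W, v ∈ L := by
    obtain ⟨x₀, hx₀⟩ := List.exists_mem_of_ne_nil L hne
    intro v
    induction hconn x₀ v with
    | refl => exact hx₀
    | tail h1 h2 ihm =>
      rename_i b c
      by_contra hc
      have h0 : L.count c = 0 := List.count_eq_zero_of_not_mem hc
      have hz := hbal c
      rw [h0] at hz
      simp only [Nat.cast_zero, zero_mul] at hz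
      have hbpos : 0 < L.count b := List.count_pos_iff.mpr ihm
      have hterm : (L.count b : ℤ) * m b c ≤ ∑ u, (L.count u : ℤ) * m u c :=
        Finset.single_le_sum (f := fun u => (L.count u : ℤ) * m u c)
          (fun u _ => mul_nonneg (by positivity) (by positivity)) (Finset.mem_univ b)
      have h1' : 1 ≤ L.count b * m b c := Nat.mul_pos hbpos h2
      have : (1:ℤ) ≤ (L.count b : ℤ) * m b c := by exact_mod_cast h1'
      linarith
  set P := L.dedup with hPdef
  have hnd : P.Nodup := List.nodup_dedup L
  have hmemP : ∀ v : W, v ∈ P := fun v => List.mem_dedup.mpr (hmemL v)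
  refine ⟨P, hnd, hmemP, ?_⟩
  rw [mgLegal_iff_splits]
  intro A x B hsplit
  have hndsplit : (A ++ x :: B).Nodup := hsplit ▸ hnd
  rw [List.nodup_append] at hndsplit
  obtain ⟨hndA, hndxB, hdisj⟩ := hndsplit
  have hxA : x ∉ A := fun hx => hdisj x hx x (by simp) rfl
  have hxB : x ∉ B := (List.nodup_cons.mp hndxB).1
  obtain ⟨A₀, B₀, hL0, hxB₀, hBB₀⟩ := dedup_split L hsplit
  have hlegx : (mgDeg m x : ℤ) ≤ mgPlay m f A₀ x :=
    (mgLegal_iff_splits m f L).1 hleg A₀ x B₀ hL0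
  rw [mgPlay_count m hloop] at hlegx
  have hcx : (L.count x : ℤ) = (A₀.count x : ℤ) + 1 := by
    rw [hL0]
    have : B₀.count x = 0 := List.count_eq_zero_of_not_mem hxB₀
    simp [List.count_append, List.count_cons, this]
  have hkey : ∑ u, (if u ∈ B₀ then (1:ℤ) else 0) * m u x ≤ f x := by
    have e2 : ∀ u : W, (if u ∈ B₀ then (1:ℤ) else 0) * m u x
        ≤ ((L.count u : ℤ) - A₀.count u) * m u x := by
      intro u
      by_cases hu : u ∈ B₀
      · have hcnt : A₀.count u + 1 ≤ L.count u := by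
          rw [hL0]
          have : 0 < B₀.count u := List.count_pos_iff.mpr hu
          simp [List.count_append, List.count_cons]
          omega
        have h1 : (1:ℤ) ≤ (L.count u : ℤ) - A₀.count u := by
          have : ((A₀.count u : ℤ)) + 1 ≤ (L.count u : ℤ) := by exact_mod_cast hcnt
          linarith
        simp only [hu, if_true]
        exact mul_le_mul_of_nonneg_right h1 (by positivity)
      · have hle : A₀.count u ≤ L.count u := by
          rw [hL0]
          simp [List.count_append]
        have : (0:ℤ) ≤ (L.count u : ℤ) - A₀.count u := by
          have : ((A₀.count u : ℤ)) ≤ (L.count u : ℤ) := by exact_mod_cast hle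
          linarith
        simp only [hu, if_false]
        rw [zero_mul]
        positivity
    have e1 : ∑ u, ((L.count u : ℤ) - A₀.count u) * m u x
        = (L.count x : ℤ) * mgDeg m x - ∑ u, (A₀.count u : ℤ) * m u x := by
      rw [hbal x, ← Finset.sum_sub_distrib]
      exact Finset.sum_congr rfl fun u _ => by ring
    calc ∑ u, (if u ∈ B₀ then (1:ℤ) else 0) * m u x
        ≤ ∑ u, ((L.count u : ℤ) - A₀.count u) * m u x :=
          Finset.sum_le_sum (fun u _ => e2 u)
      _ = (L.count x : ℤ) * mgDeg m x - ∑ u, (A₀.count u : ℤ) * m u x := e1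
      _ ≤ f x := by rw [hcx]; linarith
  rw [mgPlay_count m hloop]
  have hxA0 : A.count x = 0 := List.count_eq_zero_of_not_mem hxA
  rw [hxA0]
  have hcover : ∀ u : W, u ≠ x → (u ∈ A ∧ u ∉ B) ∨ (u ∈ B ∧ u ∉ A) := by
    intro u hu
    have hmem' : u ∈ A ++ x :: B := hsplit ▸ hmemP u
    rcases List.mem_append.mp hmem' with h | h
    · exact Or.inl ⟨h, fun hB => hdisj u h u (by simp [hB]) rfl⟩
    · rcases List.mem_cons.mp h with h' | h'
      · exact absurd h' hu
      · exact Or.inr ⟨h', fun hA' => hdisj u hA' u (by simp [h']) rfl⟩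
  have hAcnt : ∀ u : W, (A.count u : ℤ) = if u ∈ A then 1 else 0 := by
    intro u
    by_cases hu : u ∈ A
    · simp [hu, List.count_eq_one_of_mem hndA hu]
    · simp [hu, List.count_eq_zero_of_not_mem hu]
  have hBsum : ∑ u, (if u ∈ B then (1:ℤ) else 0) * m u x ≤ f x := by
    refine le_trans (Finset.sum_le_sum fun u _ => ?_) hkey
    by_cases hu : u ∈ B
    · simp [hu, hBB₀ u hu]
    · simp only [hu, if_false, zero_mul]
      positivity
  have hpt : ∀ u : W, ((A.count u : ℤ) + (if u ∈ B then (1:ℤ) else 0)) * m u x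
      = (m u x : ℤ) := by
    intro u
    by_cases hux : u = x
    · subst hux
      rw [hloop u]
      push_cast
      ring
    · rcases hcover u hux with ⟨h1, h2⟩ | ⟨h1, h2⟩
      · rw [hAcnt]
        simp [h1, h2]
      · rw [hAcnt]
        simp [h1, h2]
  have hexpand : (mgDeg m x : ℤ)
      = ∑ u, (A.count u : ℤ) * m u x + ∑ u, (if u ∈ B then (1:ℤ) else 0) * m u x := by
    rw [← Finset.sum_add_distrib]
    rw [show ∑ u, ((A.count u : ℤ) * m u x + (if u ∈ B then (1:ℤ) else 0) * m u x)
        = ∑ u, (m u x : ℤ) from Finset.sum_congr rfl fun u _ => by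
          calc (A.count u : ℤ) * m u x + (if u ∈ B then (1:ℤ) else 0) * m u x
              = ((A.count u : ℤ) + (if u ∈ B then (1:ℤ) else 0)) * m u x := by ring
            _ = (m u x : ℤ) := hpt u]
    exact (sum_col_eq_deg m hsymm x).symm
  push_cast
  linarith

lemma length_eq_sum_count (L : List W) : L.length = ∑ v, L.count v := by
  induction L with
  | nil => simp
  | cons a T ih =>
    rw [List.length_cons, ih]
    have hc : ∀ v : W, (a :: T).count v = T.count v + if a = v then 1 else 0 := by
      intro v
      rw [List.count_cons]
      by_cases h : a = v
      · simp [h]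
      · have h' : ¬ (v = a) := fun hh => h hh.symm
        simp [h, h']
    simp only [hc]
    rw [Finset.sum_add_distrib, Finset.sum_ite_eq, if_pos (Finset.mem_univ a)]

lemma exists_len (m : W → W → ℕ) (H : W → ℤ) (h : ¬ mgHalting m H) :
    ∀ k, ∃ L, mgLegal m H L ∧ L.length = k := by
  intro k
  induction k with
  | zero => exact ⟨[], mgLegal_nil _ _, rfl⟩
  | succ k ih =>
    obtain ⟨L, hL, hlen⟩ := ih
    have hst : ¬ mgStable m (mgPlay m H L) := fun hst => h ⟨L, hL, hst⟩
    simp only [mgStable, not_forall, not_lt] at hst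
    obtain ⟨v, hv⟩ := hst
    refine ⟨L ++ [v], ?_, by simp [hlen]⟩
    rw [mgLegal_append]
    exact ⟨hL, hv, mgLegal_nil _ _⟩
end Helpers

attribute [-instance] Option.instBEq instBEqOption

section Apex

variable (m : V → V → ℕ) (M : ℕ)

lemma apexM_symm (hsymm : ∀ u v, m u v = m v u) :
    ∀ a b, apexM m M a b = apexM m M b a := by
  rintro (_ | u) (_ | v) <;> simp [apexM, hsymm]

lemma apexM_loop (hloop : ∀ v, m v v = 0) : ∀ a, apexM m M a a = 0 := by
  rintro (_ | v) <;> simp [apexM, hloop]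

lemma apexDeg_some (v : V) : mgDeg (apexM m M) (some v) = M + mgDeg m v := by
  rw [mgDeg, Fintype.sum_option]
  simp [apexM, mgDeg]

lemma apexDeg_none : mgDeg (apexM m M) (none : Option V) = Fintype.card V * M := by
  rw [mgDeg, Fintype.sum_option]
  simp [apexM, Finset.sum_const, mul_comm]

lemma count_map_some (Q : List V) (v : V) : (Q.map some).count (some v) = Q.count v := by
  induction Q with
  | nil => rfl
  | cons a T ih =>
    rw [List.map_cons, List.count_cons, List.count_cons, ih]
    by_cases h : a = v
    · simp [h]
    · have h1 : ¬ (some a = some v) := by simp [h]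
      simp [h, h1]

lemma count_map_none (Q : List V) : (Q.map some).count (none : Option V) = 0 :=
  List.count_eq_zero_of_not_mem (by simp)

lemma eq_map_some {A : List (Option V)} (h : (none : Option V) ∉ A) :
    ∃ Q : List V, A = Q.map some := by
  induction A with
  | nil => exact ⟨[], rfl⟩
  | cons o T ih =>
    obtain ⟨Q, hQ⟩ := ih (fun hm => h (by simp [hm]))
    cases o with
    | none => exact absurd (by simp) h
    | some q => exact ⟨q :: Q, by rw [List.map_cons, hQ]⟩

lemma map_some_split : ∀ (Q : List V) (A : List (Option V)) (x : Option V)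
    (B : List (Option V)), Q.map some = A ++ x :: B →
    ∃ A₁ v B₁, Q = A₁ ++ v :: B₁ ∧ A = A₁.map some ∧ x = some v := by
  intro Q
  induction Q with
  | nil => intro A x B h; exact absurd h (by simp)
  | cons q T ih =>
    intro A x B h
    cases A with
    | nil =>
      rw [List.map_cons, List.nil_append] at h
      injection h with h1 h2
      exact ⟨[], q, T, rfl, rfl, h1.symm⟩
    | cons a A' =>
      rw [List.map_cons, List.cons_append] at h
      injection h with h1 h2
      obtain ⟨A₁, v, B₁, e1, e2, e3⟩ := ih A' x B h2
      exact ⟨q :: A₁, v, B₁, by rw [e1]; rfl, by rw [List.map_cons, e2, h1], e3⟩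

lemma apex_play_some (hloop : ∀ v, m v v = 0) (H : Option V → ℤ) (A₁ : List V) (v : V) :
    mgPlay (apexM m M) H (A₁.map some) (some v)
      = H (some v) + ∑ u, (A₁.count u : ℤ) * m u v
        - (A₁.count v : ℤ) * ((M : ℤ) + mgDeg m v) := by
  rw [mgPlay_count _ (apexM_loop m M hloop)]
  rw [Fintype.sum_option]
  rw [count_map_none]
  simp only [count_map_some]
  rw [apexDeg_some]
  have : ∀ u : V, (apexM m M (some u) (some v)) = m u v := fun u => rfl
  simp only [this]
  push_cast
  ring

lemma apex_play_none (hloop : ∀ v, m v v = 0) (H : Option V → ℤ) (A₁ : List V) :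
    mgPlay (apexM m M) H (A₁.map some) (none : Option V)
      = H none + (∑ u, (A₁.count u : ℤ)) * M := by
  rw [mgPlay_count _ (apexM_loop m M hloop)]
  rw [Fintype.sum_option]
  rw [count_map_none]
  simp only [count_map_some]
  have : ∀ u : V, (apexM m M (some u) (none : Option V)) = M := fun u => rfl
  simp only [this]
  rw [Finset.sum_mul]
  push_cast
  ring

lemma bridge (hloop : ∀ v, m v v = 0) (F : V → ℤ) (H : Option V → ℤ)
    (hH : ∀ v, H (some v) = F v + M) {Q : List V} (hQ : ∀ v, Q.count v ≤ 1) :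
    mgLegal (apexM m M) H (Q.map some) ↔ mgLegal m F Q := by
  constructor
  · intro h
    rw [mgLegal_iff_splits]
    intro A₁ v B₁ hQsplit
    have hA1v : A₁.count v = 0 := by
      have := hQ v
      rw [hQsplit] at this
      simp [List.count_append, List.count_cons] at this
      omega
    have h' := (mgLegal_iff_splits _ _ _).1 h (A₁.map some) (some v) (B₁.map some)
      (by rw [hQsplit]; simp)
    rw [apex_play_some m M hloop H A₁ v, hA1v, apexDeg_some, hH] at h'
    rw [mgPlay_count m hloop, hA1v]
    push_cast at h' ⊢
    linarith
  · intro h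
    rw [mgLegal_iff_splits]
    intro A x B hsplit
    obtain ⟨A₁, v, B₁, e1, e2, e3⟩ := map_some_split Q A x B hsplit
    subst e2; subst e3
    have hA1v : A₁.count v = 0 := by
      have := hQ v
      rw [e1] at this
      simp [List.count_append, List.count_cons] at this
      omega
    have h' := (mgLegal_iff_splits _ _ _).1 h A₁ v B₁ e1
    rw [mgPlay_count m hloop, hA1v] at h'
    rw [apex_play_some m M hloop H A₁ v, hA1v, apexDeg_some, hH]
    push_cast at h' ⊢
    linarith

lemma no_some_repeat (hsymm : ∀ u v, m u v = m v u) (hloop : ∀ v, m v v = 0)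
    (F : V → ℤ) (H : Option V → ℤ) (hH : ∀ v, H (some v) = F v + M)
    (hsmall : ∀ v, F v < (mgDeg m v : ℤ) + M) :
    ∀ (L : List (Option V)), mgLegal (apexM m M) H L → (none : Option V) ∉ L →
      ∀ v, L.count (some v) ≤ 1 := by
  intro L
  induction L using List.reverseRecOn with
  | nil => intro _ _ v; simp
  | append_singleton A x ih =>
    intro hleg hnone v
    have hnoneA : (none : Option V) ∉ A := fun h => hnone (by simp [h])
    have hlegA : mgLegal (apexM m M) H A := ((mgLegal_append _ _ _ _).1 hleg).1
    have ihA := ih hlegA hnoneA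
    have hcount : (A ++ [x]).count (some v)
        = A.count (some v) + if x = some v then 1 else 0 := by
      rw [List.count_append]
      congr 1
      by_cases h : x = some v
      · subst h; simp
      · have h' : ¬ (some v = x) := fun hh => h hh.symm
        have : (some v) ∉ [x] := by simp [h']
        rw [List.count_eq_zero_of_not_mem this]
        simp [h]
    by_cases hx : x = some v
    · by_cases h1 : A.count (some v) = 0
      · rw [hcount]
        simp [hx, h1]
      · exfalso
        have h1' : A.count (some v) = 1 := le_antisymm (ihA v) (Nat.one_le_iff_ne_zero.mpr h1)
        have hact : (mgDeg (apexM m M) (some v) : ℤ) ≤ mgPlay (apexM m M) H A (some v) := by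
          have h2 := ((mgLegal_append _ _ _ _).1 hleg).2
          rw [hx] at h2
          exact h2.1
        obtain ⟨Q, rfl⟩ := eq_map_some hnoneA
        rw [apex_play_some m M hloop H Q v, apexDeg_some] at hact
        have hQv : Q.count v = 1 := by rw [← count_map_some]; exact h1'
        have hQle : ∀ u, Q.count u ≤ 1 := fun u => by
          rw [← count_map_some]; exact ihA u
        have hsum : ∑ u, (Q.count u : ℤ) * m u v ≤ (mgDeg m v : ℤ) := by
          calc ∑ u, (Q.count u : ℤ) * m u v ≤ ∑ u, (m u v : ℤ) := by
                refine Finset.sum_le_sum fun u _ => ?_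
                have := hQle u
                have hc1 : (Q.count u : ℤ) ≤ 1 := by exact_mod_cast this
                exact mul_le_of_le_one_left (by positivity) hc1
            _ = (mgDeg m v : ℤ) := sum_col_eq_deg m hsymm v
        rw [hQv, hH] at hact
        have := hsmall v
        push_cast at hact
        linarith
    · rw [hcount]
      simp only [hx, if_false, add_zero]
      exact ihA v

end Apex

/-- `dist_rec_G(f) = dist_nonhalt_{G'}(f')` for the apex construction. -/
theorem stmt16 [Nonempty V] (m : V → V → ℕ) (hsymm : ∀ u v, m u v = m v u)
    (hloop : ∀ v, m v v = 0) (hconn : mgConnected m) (f : V → ℤ) (M : ℕ)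
    (hMpos : 0 < M)
    (hM : (mgDistRec m f : ℤ) +
        max 0 (Finset.univ.sup' Finset.univ_nonempty (fun v => f v - (mgDeg m v : ℤ)))
      < (M : ℤ)) :
    mgDistRec m f = mgDistNonhalt (apexM m M) (apexF f M) := by
  classical
  have hsymm' := apexM_symm m M hsymm
  have hloop' := apexM_loop m M hloop
  set D := mgDistRec m f with hD
  have hSrec_ne : {n : ℕ | ∃ g : V → ℤ, mgEffective g ∧ mgDegDiv g = (n : ℤ) ∧
      mgRecurrent m (f + g)}.Nonempty := by
    set g0 : V → ℤ := fun v => max ((mgDeg m v : ℤ) - f v) 0 with hg0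
    have hg0eff : mgEffective g0 := fun v => le_max_right _ _
    have hg0nn : 0 ≤ mgDegDiv g0 := Finset.sum_nonneg fun v _ => le_max_right _ _
    refine ⟨(mgDegDiv g0).toNat, g0, hg0eff, (Int.toNat_of_nonneg hg0nn).symm, ?_⟩
    refine recurrent_of_active m hsymm hloop ?_
    intro v
    have := le_max_left ((mgDeg m v : ℤ) - f v) 0
    simp only [Pi.add_apply, hg0]
    linarith
  -- Direction 1 : mgDistNonhalt ≤ D
  have hDmem : ∃ g : V → ℤ, mgEffective g ∧ mgDegDiv g = (D : ℤ) ∧ mgRecurrent m (f + g) :=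
    Nat.sInf_mem hSrec_ne
  obtain ⟨g, hgeff, hgdeg, hgrec⟩ := hDmem
  obtain ⟨Lc, hLcne, hLcleg, hLccyc⟩ := hgrec
  obtain ⟨P, hPnd, hPmem, hPleg⟩ := exists_perm_cycle m hsymm hloop hconn hLcne hLcleg hLccyc
  set g1 : Option V → ℤ := fun o => Option.elim o 0 g with hg1
  set H : Option V → ℤ := apexF f M + g1 with hHdef
  have hHsome : ∀ v, H (some v) = (f + g) v + (M : ℤ) := by
    intro v
    simp [hHdef, hg1, apexF, Pi.add_apply]
    ring
  have hHnone : H none = 0 := by simp [hHdef, hg1, apexF]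
  have hPcnt : ∀ v : V, P.count v = 1 := fun v => List.count_eq_one_of_mem hPnd (hPmem v)
  have hlegmap : mgLegal (apexM m M) H (P.map some) :=
    (bridge m M hloop (f + g) H hHsome (fun v => le_of_eq (hPcnt v))).2 hPleg
  have hlegW : mgLegal (apexM m M) H (P.map some ++ [none]) := by
    rw [mgLegal_append]
    refine ⟨hlegmap, ?_, trivial⟩
    rw [apex_play_none m M hloop H P, apexDeg_none, hHnone]
    have hsum1 : (∑ u : V, ((P.count u : ℤ))) = (Fintype.card V : ℤ) := by
      simp [hPcnt, Finset.card_univ]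
    rw [hsum1]
    push_cast
    linarith
  have hcntW : ∀ o : Option V, (P.map some ++ [none]).count o = 1 := by
    rintro (_ | v)
    · rw [List.count_append, count_map_none]
      simp
    · rw [List.count_append, count_map_some, hPcnt]
      have hnm : (some v) ∉ [(none : Option V)] := by simp
      rw [List.count_eq_zero_of_not_mem hnm]
  have hplayW : mgPlay (apexM m M) H (P.map some ++ [none]) = H := by
    funext o
    rw [mgPlay_count _ hloop']
    simp only [hcntW]
    rw [show (∑ u : Option V, ((1:ℕ):ℤ) * (apexM m M u o : ℤ))
        = ∑ u : Option V, (apexM m M u o : ℤ) by simp]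
    rw [sum_col_eq_deg _ hsymm' o]
    push_cast
    ring
  have hHnonhalt : ¬ mgHalting (apexM m M) H :=
    not_halting_of_recurrent _ hloop' ⟨P.map some ++ [none], by simp, hlegW, hplayW⟩
  have hle1 : mgDistNonhalt (apexM m M) (apexF f M) ≤ D := by
    refine Nat.sInf_le ⟨g1, fun o => ?_, ?_, hHnonhalt⟩
    · cases o with
      | none => simp [hg1]
      | some v => simpa [hg1] using hgeff v
    · have e : mgDegDiv g1 = g1 none + ∑ v, g1 (some v) := Fintype.sum_option g1
      rw [e]
      simp only [hg1, Option.elim]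
      simpa [mgDegDiv] using hgdeg
  -- Direction 2 : D ≤ mgDistNonhalt
  have hle2 : D ≤ mgDistNonhalt (apexM m M) (apexF f M) := by
    by_contra hcon
    push_neg at hcon
    set N := mgDistNonhalt (apexM m M) (apexF f M) with hN
    have hSnh_ne : {n : ℕ | ∃ g' : Option V → ℤ, mgEffective g' ∧ mgDegDiv g' = (n : ℤ) ∧
        ¬ mgHalting (apexM m M) (apexF f M + g')}.Nonempty := by
      set g2 : Option V → ℤ := fun o => max ((mgDeg (apexM m M) o : ℤ) - apexF f M o) 0 with hg2
      have hnn : 0 ≤ mgDegDiv g2 := Finset.sum_nonneg fun o _ => le_max_right _ _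
      refine ⟨(mgDegDiv g2).toNat, g2, fun o => le_max_right _ _,
        (Int.toNat_of_nonneg hnn).symm, ?_⟩
      refine not_halting_of_recurrent _ hloop' (recurrent_of_active _ hsymm' hloop' ?_)
      intro o
      have := le_max_left ((mgDeg (apexM m M) o : ℤ) - apexF f M o) 0
      simp only [Pi.add_apply, hg2]
      linarith
    have hNmem : ∃ g' : Option V → ℤ, mgEffective g' ∧ mgDegDiv g' = (N : ℤ) ∧
        ¬ mgHalting (apexM m M) (apexF f M + g') := Nat.sInf_mem hSnh_ne
    obtain ⟨g', hg'eff, hg'deg, hg'nh⟩ := hNmem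
    set Fh : V → ℤ := fun v => f v + g' (some v) with hFh
    have hHsome2 : ∀ v, (apexF f M + g') (some v) = Fh v + (M : ℤ) := by
      intro v
      simp [apexF, Pi.add_apply, hFh]
      ring
    have hgsum : ∑ v, g' (some v) = (N : ℤ) - g' none := by
      have e : mgDegDiv g' = g' none + ∑ v, g' (some v) := Fintype.sum_option g'
      rw [hg'deg] at e
      linarith
    have hgnn : (0:ℤ) ≤ ∑ v, g' (some v) := Finset.sum_nonneg fun v _ => hg'eff (some v)
    have hko : (0:ℤ) ≤ g' none := hg'eff none
    have hND : (N : ℤ) + 1 ≤ (D : ℤ) := by exact_mod_cast hcon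
    have hmax0 : (0:ℤ) ≤ max 0 (Finset.univ.sup' Finset.univ_nonempty
        (fun v => f v - (mgDeg m v : ℤ))) := le_max_left _ _
    have hsmall : ∀ v, Fh v < (mgDeg m v : ℤ) + M := by
      intro v
      have h1 : g' (some v) ≤ ∑ u, g' (some u) :=
        Finset.single_le_sum (f := fun u => g' (some u)) (fun u _ => hg'eff (some u))
          (Finset.mem_univ v)
      have h2 : f v - (mgDeg m v : ℤ) ≤ max 0 (Finset.univ.sup' Finset.univ_nonempty
          (fun v => f v - (mgDeg m v : ℤ))) :=
        le_trans (Finset.le_sup' (fun v => f v - (mgDeg m v : ℤ)) (Finset.mem_univ v)) (le_max_right _ _)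
      simp only [hFh]
      linarith [hM]
    obtain ⟨L, hLleg, hLlen⟩ := exists_len _ _ hg'nh (Fintype.card V + 1)
    have hnoneL : (none : Option V) ∈ L := by
      by_contra hn
      obtain ⟨Q, rfl⟩ := eq_map_some hn
      have hc := no_some_repeat m M hsymm hloop Fh _ hHsome2 hsmall _ hLleg hn
      have hQc : ∀ v, Q.count v ≤ 1 := fun v => by rw [← count_map_some]; exact hc v
      have hlen2 : Q.length ≤ Fintype.card V := by
        rw [length_eq_sum_count]
        calc ∑ v, Q.count v ≤ ∑ _v : V, 1 := Finset.sum_le_sum fun v _ => hQc v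
          _ = Fintype.card V := by simp
      rw [List.length_map] at hLlen
      omega
    obtain ⟨A, B, hLsplit, hAnone⟩ := exists_first_split hnoneL
    rw [hLsplit, mgLegal_append] at hLleg
    obtain ⟨hAleg, hrest⟩ := hLleg
    have hnoneact := hrest.1
    obtain ⟨Q, rfl⟩ := eq_map_some hAnone
    have hQc : ∀ v, Q.count v ≤ 1 := fun v => by
      rw [← count_map_some]
      exact no_some_repeat m M hsymm hloop Fh _ hHsome2 hsmall _ hAleg hAnone v
    rw [apex_play_none m M hloop _ Q, apexDeg_none] at hnoneact
    have hκ : (apexF f M + g') none = g' none := by simp [apexF]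
    rw [hκ] at hnoneact
    have hκM : g' none < (M : ℤ) := by linarith [hM, hmax0, hND, hgsum, hgnn]
    have hcast : (∑ u, ((Q.count u : ℤ))) = ((∑ u, Q.count u : ℕ) : ℤ) := by
      push_cast
      rfl
    rw [hcast] at hnoneact
    have hsum_ge : Fintype.card V ≤ ∑ v, Q.count v := by
      by_contra hlt
      push_neg at hlt
      have h1 : ((∑ v, Q.count v : ℕ) : ℤ) ≤ (Fintype.card V : ℤ) - 1 := by
        omega
      have hMz : (0:ℤ) ≤ (M : ℤ) := by positivity
      have hprod : ((∑ v, Q.count v : ℕ) : ℤ) * M ≤ ((Fintype.card V : ℤ) - 1) * M :=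
        mul_le_mul_of_nonneg_right h1 hMz
      push_cast at hnoneact
      nlinarith [hκM, hprod, hnoneact]
    have hQ1 : ∀ v, Q.count v = 1 := by
      intro v
      by_contra h0
      have hv0 : Q.count v = 0 := by have := hQc v; omega
      have hbig : ∑ u, Q.count u ≤ Fintype.card V - 1 := by
        have e : ∑ u, Q.count u = Q.count v + ∑ u ∈ Finset.univ.erase v, Q.count u :=
          (Finset.add_sum_erase _ _ (Finset.mem_univ v)).symm
        have hb : ∑ u ∈ Finset.univ.erase v, Q.count u ≤ (Finset.univ.erase v).card := by
          calc ∑ u ∈ Finset.univ.erase v, Q.count u ≤ ∑ _u ∈ Finset.univ.erase v, 1 :=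
                Finset.sum_le_sum fun u _ => hQc u
            _ = (Finset.univ.erase v).card := by simp
        have hce : (Finset.univ.erase v).card = Fintype.card V - 1 := by
          rw [Finset.card_erase_of_mem (Finset.mem_univ v), Finset.card_univ]
        rw [e, hv0]
        omega
      have hcard : 0 < Fintype.card V := Fintype.card_pos
      omega
    have hQleg : mgLegal m Fh Q := (bridge m M hloop Fh _ hHsome2 hQc).1 hAleg
    have hQcyc : mgPlay m Fh Q = Fh := by
      funext v
      rw [mgPlay_count m hloop]
      simp only [hQ1]
      rw [show (∑ u : V, ((1:ℕ):ℤ) * (m u v : ℤ)) = ∑ u, (m u v : ℤ) by simp]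
      rw [sum_col_eq_deg m hsymm v]
      push_cast
      ring
    have hQne : Q ≠ [] := by
      intro h
      obtain ⟨v⟩ := ‹Nonempty V›
      have h1 := hQ1 v
      rw [h] at h1
      simp at h1
    have hrecFh : mgRecurrent m Fh := ⟨Q, hQne, hQleg, hQcyc⟩
    have hmem2 : (∑ v, g' (some v)).toNat ∈ {n : ℕ | ∃ g : V → ℤ, mgEffective g ∧
        mgDegDiv g = (n : ℤ) ∧ mgRecurrent m (f + g)} := by
      refine ⟨fun v => g' (some v), fun v => hg'eff (some v), ?_, ?_⟩
      · exact (Int.toNat_of_nonneg hgnn).symm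
      · have e : f + (fun v => g' (some v)) = Fh := by
          funext v
          simp [hFh]
        rw [e]
        exact hrecFh
    have hD2 : D ≤ (∑ v, g' (some v)).toNat := Nat.sInf_le hmem2
    have hle : ((∑ v, g' (some v)).toNat : ℤ) ≤ (N : ℤ) := by
      rw [Int.toNat_of_nonneg hgnn, hgsum]
      linarith
    have hfin : (∑ v, g' (some v)).toNat ≤ N := by exact_mod_cast hle
    omega
  exact le_antisymm hle2 hle1
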